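/- For every n ≥ 1, nonempty finite sets V_1, ..., V_n, and every d with 0 ≤ d ≤ n-1, the d-skeleton of the pseudosphere Ψ({(p_i, V_i) | i ∈ [n]}) is shellable. -/

import Mathlib

def IsComplex {V : Type*} (S : Set (Finset V)) : Prop :=
  ∀ s ∈ S, s.Nonempty ∧ ∀ t : Finset V, t ⊆ s → t.Nonempty → t ∈ S

def IsFacet {V : Type*} (S : Set (Finset V)) (s : Finset V) : Prop :=
  s ∈ S ∧ ∀ t ∈ S, s ⊆ t → s = t

def IsPure {V : Type*} (S : Set (Finset V)) (d : ℕ) : Prop :=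
  ∀ s, IsFacet S s → s.card = d + 1

/-- An ordering `φ 0, …, φ N` of facets (all of cardinality `d+1`) is a shelling order:
for every `k ≥ 1`, the intersection of `φ k` with the union of the previous facets is a
nonempty union of `(d-1)`-dimensional faces (i.e. faces of cardinality `d`) of `φ k`. -/
def IsShellingOrder {V : Type*} (d N : ℕ) (φ : Fin (N + 1) → Finset V) : Prop :=
  ∀ k : Fin (N + 1), 0 < (k : ℕ) →
    (∃ t : Finset V, t ⊆ φ k ∧ t.card = d ∧ ∃ i : Fin (N + 1), (i : ℕ) < (k : ℕ) ∧ t ⊆ φ i) ∧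
    (∀ t : Finset V, t.Nonempty → t ⊆ φ k →
      (∃ i : Fin (N + 1), (i : ℕ) < (k : ℕ) ∧ t ⊆ φ i) →
      ∃ t' : Finset V, t ⊆ t' ∧ t' ⊆ φ k ∧ t'.card = d ∧
        ∃ i : Fin (N + 1), (i : ℕ) < (k : ℕ) ∧ t' ⊆ φ i)

/-- A complex is shellable of dimension `d` if it is pure of dimension `d` and its facets
admit an enumeration which is a shelling order. -/
def Shellable {V : Type*} (S : Set (Finset V)) (d : ℕ) : Prop :=
  IsPure S d ∧ ∃ (N : ℕ) (φ : Fin (N + 1) → Finset V),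
    Function.Injective φ ∧ (∀ i, IsFacet S (φ i)) ∧
    (∀ s, IsFacet S s → ∃ i, φ i = s) ∧ IsShellingOrder d N φ

/-- The pseudosphere `Ψ({(p_i, V_i) | i ∈ [n]})`: faces are nonempty sets of pairs `(i, v)`
with `v ∈ Vs i`, containing at most one vertex per process `i`. -/
def Pseudosphere (n : ℕ) {α : Type*} (Vs : Fin n → Finset α) : Set (Finset (Fin n × α)) :=
  {s | s.Nonempty ∧ (∀ p ∈ s, p.2 ∈ Vs p.1) ∧ ∀ p ∈ s, ∀ q ∈ s, p.1 = q.1 → p = q}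

section PseudoAux

variable {n : ℕ} {α : Type*} [DecidableEq α]

/-- Facet predicate for the `d`-skeleton of the pseudosphere. -/
def PFacet (Vs : Fin n → Finset α) (d : ℕ) (s : Finset (Fin n × α)) : Prop :=
  s.card = d + 1 ∧ (∀ p ∈ s, p.2 ∈ Vs p.1) ∧ ∀ p ∈ s, ∀ q ∈ s, p.1 = q.1 → p = q

instance (Vs : Fin n → Finset α) (d : ℕ) : DecidablePred (PFacet Vs d) := fun s => by
  unfold PFacet; infer_instance

/-- Lexicographic key of a face: at each process `i`, the position of its value in `Vs i`,
or `(Vs i).card` ("infinity") if process `i` does not occur. -/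
noncomputable def pkey (Vs : Fin n → Finset α) (s : Finset (Fin n × α)) (i : Fin n) : ℕ :=
  if (s.filter (fun p => p.1 = i)) = ∅ then (Vs i).card
  else ∑ p ∈ s.filter (fun p => p.1 = i), (Vs i).toList.idxOf p.2

variable {Vs : Fin n → Finset α} {d : ℕ}

omit [DecidableEq α] in
lemma uniq_injOn {s : Finset (Fin n × α)}
    (huniq : ∀ p ∈ s, ∀ q ∈ s, p.1 = q.1 → p = q) :
    Set.InjOn (Prod.fst : Fin n × α → Fin n) ↑s :=
  fun p hp q hq h => huniq p hp q hq h

lemma pkey_congr {s t : Finset (Fin n × α)} {i : Fin n}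
    (h : s.filter (fun p => p.1 = i) = t.filter (fun p => p.1 = i)) :
    pkey Vs s i = pkey Vs t i := by
  unfold pkey; rw [h]

lemma filter_eq_singleton {s : Finset (Fin n × α)}
    (huniq : ∀ p ∈ s, ∀ q ∈ s, p.1 = q.1 → p = q) {i : Fin n} {v : α} (hv : (i, v) ∈ s) :
    s.filter (fun p => p.1 = i) = {(i, v)} := by
  ext p
  simp only [Finset.mem_filter, Finset.mem_singleton]
  constructor
  · rintro ⟨hp, hpi⟩
    exact huniq p hp (i, v) hv hpi
  · rintro rfl
    exact ⟨hv, rfl⟩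

lemma pkey_mem {s : Finset (Fin n × α)}
    (huniq : ∀ p ∈ s, ∀ q ∈ s, p.1 = q.1 → p = q) {i : Fin n} {v : α} (hv : (i, v) ∈ s) :
    pkey Vs s i = (Vs i).toList.idxOf v := by
  unfold pkey
  rw [filter_eq_singleton huniq hv]
  simp

lemma pkey_not_mem {s : Finset (Fin n × α)} {i : Fin n} (h : ∀ v, (i, v) ∉ s) :
    pkey Vs s i = (Vs i).card := by
  unfold pkey
  rw [if_pos]
  ext p
  simp only [Finset.mem_filter, Finset.notMem_empty, iff_false, not_and]
  intro hp hpi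
  exact absurd hp (by have := h p.2; rwa [← hpi, Prod.mk.eta] at this)

lemma pkey_lt_of_mem {s : Finset (Fin n × α)} (hs : PFacet Vs d s) {i : Fin n} {v : α}
    (hv : (i, v) ∈ s) : pkey Vs s i < (Vs i).card := by
  rw [pkey_mem hs.2.2 hv, ← Finset.length_toList]
  exact List.idxOf_lt_length_iff.2 (Finset.mem_toList.2 (hs.2.1 _ hv))

lemma exists_mem_of_pkey_lt {s : Finset (Fin n × α)} {i : Fin n}
    (h : pkey Vs s i < (Vs i).card) : ∃ v, (i, v) ∈ s := by
  by_contra hc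
  push_neg at hc
  rw [pkey_not_mem hc] at h
  exact lt_irrefl _ h

lemma pkey_injective {s t : Finset (Fin n × α)} (hs : PFacet Vs d s) (ht : PFacet Vs d t)
    (h : pkey Vs s = pkey Vs t) : s = t := by
  have key : ∀ s t : Finset (Fin n × α), PFacet Vs d s → PFacet Vs d t →
      pkey Vs s = pkey Vs t → ∀ p ∈ s, p ∈ t := by
    rintro s t hs ht h ⟨i, v⟩ hv
    have h1 : pkey Vs t i < (Vs i).card := by
      rw [← congrFun h i]; exact pkey_lt_of_mem hs hv
    obtain ⟨w, hw⟩ := exists_mem_of_pkey_lt h1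
    have e1 : pkey Vs s i = (Vs i).toList.idxOf v := pkey_mem hs.2.2 hv
    have e2 : pkey Vs t i = (Vs i).toList.idxOf w := pkey_mem ht.2.2 hw
    have h2 : (Vs i).toList.idxOf v = (Vs i).toList.idxOf w := by
      rw [← e1, ← e2, congrFun h i]
    have h3 : v = w :=
      (List.idxOf_inj (Finset.mem_toList.2 (hs.2.1 (i, v) hv : v ∈ Vs i))).1 h2
    rw [h3]; exact hw
  exact Finset.Subset.antisymm (key s t hs ht h) (key t s ht hs h.symm)

/-- A vertex `(i,v)` of a facet `s` is removable if its value is not the minimal value of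
`Vs i`, or if some smaller process index is unused in `s`. -/
def Rem (Vs : Fin n → Finset α) (s : Finset (Fin n × α)) (x : Fin n × α) : Prop :=
  0 < (Vs x.1).toList.idxOf x.2 ∨ ∃ j : Fin n, j < x.1 ∧ ∀ w, (j, w) ∉ s

lemma lex_lt_iff {x y : Fin n → ℕ} :
    toLex x < toLex y ↔ ∃ i, (∀ j, j < i → x j = y j) ∧ x i < y i := Iff.rfl

lemma filter_insert_erase {s : Finset (Fin n × α)} {x y : Fin n × α} {j : Fin n}
    (h1 : j ≠ y.1) (h2 : j ≠ x.1) :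
    (insert y (s.erase x)).filter (fun p => p.1 = j) = s.filter (fun p => p.1 = j) := by
  ext p
  simp only [Finset.mem_filter, Finset.mem_insert, Finset.mem_erase]
  constructor
  · rintro ⟨rfl | ⟨_, hp⟩, hpj⟩
    · exact absurd hpj.symm h1
    · exact ⟨hp, hpj⟩
  · rintro ⟨hp, hpj⟩
    refine ⟨Or.inr ⟨?_, hp⟩, hpj⟩
    rintro rfl
    exact h2 hpj.symm

lemma pfacet_insert_erase {s : Finset (Fin n × α)} (hs : PFacet Vs d s)
    {i : Fin n} {v : α} (hv : (i, v) ∈ s) {j : Fin n} {w : α} (hw : w ∈ Vs j)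
    (hfree : ∀ q ∈ s.erase (i, v), q.1 ≠ j) :
    PFacet Vs d (insert (j, w) (s.erase (i, v))) := by
  have hnotin : (j, w) ∉ s.erase (i, v) := fun hmem => hfree _ hmem rfl
  refine ⟨?_, ?_, ?_⟩
  · rw [Finset.card_insert_of_notMem hnotin, Finset.card_erase_of_mem hv, hs.1]
    omega
  · intro p hp
    rcases Finset.mem_insert.1 hp with rfl | hp
    · exact hw
    · exact hs.2.1 _ (Finset.mem_of_mem_erase hp)
  · intro p hp q hq hpq
    rcases Finset.mem_insert.1 hp with rfl | hp <;> rcases Finset.mem_insert.1 hq with rfl | hq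
    · rfl
    · exact absurd hpq.symm (hfree q hq)
    · exact absurd hpq (hfree p hp)
    · exact hs.2.2 p (Finset.mem_of_mem_erase hp) q (Finset.mem_of_mem_erase hq) hpq

/-- Removing a removable vertex gives a face covered by a lexicographically earlier facet. -/
lemma rem_spec (hVs : ∀ i, (Vs i).Nonempty) {s : Finset (Fin n × α)} (hs : PFacet Vs d s)
    {i : Fin n} {v : α} (hv : (i, v) ∈ s) (hrem : Rem Vs s (i, v)) :
    ∃ χ : Finset (Fin n × α), PFacet Vs d χ ∧
      toLex (pkey Vs χ) < toLex (pkey Vs s) ∧ s.erase (i, v) ⊆ χ := by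
  rcases hrem with hpos | ⟨j, hji, hj⟩
  · -- replace v by the head of (Vs i).toList
    have hne : (Vs i).toList ≠ [] := by
      rw [ne_eq, Finset.toList_eq_nil]
      exact (hVs i).ne_empty
    set v' := (Vs i).toList.head hne with hv'
    have hidx0 : (Vs i).toList.idxOf v' = 0 := by
      obtain ⟨a, L, hL⟩ := List.exists_cons_of_ne_nil hne
      simp [hv', hL]
    have hv'mem : v' ∈ Vs i := Finset.mem_toList.1 (List.head_mem hne)
    have hfree : ∀ q ∈ s.erase (i, v), q.1 ≠ i := by
      intro q hq hqi
      obtain ⟨q1, q2⟩ := q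
      cases hqi
      exact Finset.ne_of_mem_erase hq
        (hs.2.2 _ (Finset.mem_of_mem_erase hq) (q1, v) hv rfl)
    refine ⟨insert (i, v') (s.erase (i, v)), pfacet_insert_erase hs hv hv'mem hfree, ?_, ?_⟩
    · refine lex_lt_iff.2 ⟨i, fun j hjlt => ?_, ?_⟩
      · exact pkey_congr (filter_insert_erase (ne_of_lt hjlt) (ne_of_lt hjlt))
      · have hχu := (pfacet_insert_erase hs hv hv'mem hfree).2.2
        rw [pkey_mem hχu (Finset.mem_insert_self _ _), hidx0, pkey_mem hs.2.2 hv]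
        exact hpos
    · exact Finset.subset_insert _ _
  · -- use an unused smaller process index j
    set w := (hVs j).choose with hwdef
    have hw : w ∈ Vs j := (hVs j).choose_spec
    have hfree : ∀ q ∈ s.erase (i, v), q.1 ≠ j := by
      intro q hq hqj
      obtain ⟨q1, q2⟩ := q
      cases hqj
      exact hj q2 (Finset.mem_of_mem_erase hq)
    refine ⟨insert (j, w) (s.erase (i, v)), pfacet_insert_erase hs hv hw hfree, ?_, ?_⟩
    · refine lex_lt_iff.2 ⟨j, fun j' hj'lt => ?_, ?_⟩
      · exact pkey_congr
          (filter_insert_erase (ne_of_lt hj'lt) (ne_of_lt (hj'lt.trans hji)))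
      · have hχu := (pfacet_insert_erase hs hv hw hfree).2.2
        rw [pkey_mem hχu (Finset.mem_insert_self _ _), pkey_not_mem hj,
          ← Finset.length_toList]
        exact List.idxOf_lt_length_iff.2 (Finset.mem_toList.2 hw)
    · exact Finset.subset_insert _ _

/-- The key combinatorial step: if a face `t` of a facet `s` is contained in a
lexicographically earlier facet `ψ`, then some vertex of `s` outside `t` is removable. -/
lemma exists_rem {s t ψ : Finset (Fin n × α)} (hs : PFacet Vs d s) (hψ : PFacet Vs d ψ)
    (hts : t ⊆ s) (htψ : t ⊆ ψ) (hlt : toLex (pkey Vs ψ) < toLex (pkey Vs s)) :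
    ∃ x ∈ s, x ∉ t ∧ Rem Vs s x := by
  obtain ⟨i, heq, hlti⟩ := lex_lt_iff.1 hlt
  by_cases hc : ∃ v, (i, v) ∈ s
  · obtain ⟨v, hv⟩ := hc
    have h2 : pkey Vs s i = (Vs i).toList.idxOf v := pkey_mem hs.2.2 hv
    refine ⟨(i, v), hv, ?_, Or.inl ?_⟩
    · intro hvt
      have h1 : pkey Vs ψ i = (Vs i).toList.idxOf v := pkey_mem hψ.2.2 (htψ hvt)
      omega
    · show 0 < (Vs i).toList.idxOf v
      omega
  · push_neg at hc
    by_cases hc2 : ∃ x ∈ s, x ∉ t ∧ i < x.1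
    · obtain ⟨x, hx, hxt, hix⟩ := hc2
      exact ⟨x, hx, hxt, Or.inr ⟨i, hix, hc⟩⟩
    · exfalso
      push_neg at hc2
      have hsψ : s ⊆ ψ := by
        rintro ⟨i', v'⟩ hx
        by_cases hxt : (i', v') ∈ t
        · exact htψ hxt
        · have h1 : i' ≤ i := hc2 (i', v') hx hxt
          have h2 : i' ≠ i := fun he => hc v' (he ▸ hx)
          have hlt' : i' < i := lt_of_le_of_ne h1 h2
          have heqi' := heq i' hlt'
          have h3 : pkey Vs ψ i' < (Vs i').card := by
            rw [heqi']
            exact pkey_lt_of_mem hs hx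
          obtain ⟨w, hw⟩ := exists_mem_of_pkey_lt h3
          have e1 : pkey Vs ψ i' = (Vs i').toList.idxOf w := pkey_mem hψ.2.2 hw
          have e2 : pkey Vs s i' = (Vs i').toList.idxOf v' := pkey_mem hs.2.2 hx
          have h4 : w = v' :=
            (List.idxOf_inj (Finset.mem_toList.2 (hψ.2.1 (i', w) hw : w ∈ Vs i'))).1
              (by rw [← e1, ← e2, heqi'])
          rw [← h4]; exact hw
      have hse : s = ψ := Finset.eq_of_subset_of_card_le hsψ (by rw [hs.1, hψ.1])
      rw [hse] at hlti
      exact lt_irrefl _ hlti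

end PseudoAux



/-- For every `n ≥ 1`, nonempty finite sets `V_1, …, V_n`, and every
`d ≤ n - 1`, the `d`-skeleton of the pseudosphere `Ψ({(p_i, V_i) | i ∈ [n]})` is shellable. -/
theorem pseudosphere_skeleton_shellable (n : ℕ) (hn : 1 ≤ n) {α : Type*} [DecidableEq α]
    (Vs : Fin n → Finset α) (hVs : ∀ i, (Vs i).Nonempty)
    (d : ℕ) (hd : d ≤ n - 1) :
    Shellable {s ∈ Pseudosphere n Vs | s.card ≤ d + 1} d := by
  have hdn : d + 1 ≤ n := by omega
  set S := {s ∈ Pseudosphere n Vs | s.card ≤ d + 1} with hS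
  have hmemS : ∀ s : Finset (Fin n × α), s ∈ S ↔
      (s.Nonempty ∧ (∀ p ∈ s, p.2 ∈ Vs p.1) ∧ ∀ p ∈ s, ∀ q ∈ s, p.1 = q.1 → p = q) ∧
      s.card ≤ d + 1 := fun s => Iff.rfl
  -- facets of S are exactly PFacet
  have hfacet_iff : ∀ s, IsFacet S s ↔ PFacet Vs d s := by
    intro s
    constructor
    · rintro ⟨hsS, hmax⟩
      obtain ⟨⟨hne, hmem, huniq⟩, hcard⟩ := (hmemS s).1 hsS
      refine ⟨?_, hmem, huniq⟩
      by_contra hc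
      have hcard' : s.card ≤ d := by omega
      -- find an unused process index
      have himg : (s.image Prod.fst).card = s.card :=
        Finset.card_image_of_injOn (uniq_injOn huniq)
      have hlt : (s.image Prod.fst).card < Fintype.card (Fin n) := by
        rw [himg, Fintype.card_fin]; omega
      have hi : ∃ i : Fin n, i ∉ s.image Prod.fst := by
        by_contra hall
        push_neg at hall
        have : (Finset.univ : Finset (Fin n)).card ≤ (s.image Prod.fst).card :=
          Finset.card_le_card (fun i _ => hall i)
        rw [Finset.card_univ, Fintype.card_fin] at this
        omega
      obtain ⟨i, hi⟩ := hi
      have hinotin : ∀ v, (i, v) ∉ s := by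
        intro v hv
        exact hi (Finset.mem_image.2 ⟨(i, v), hv, rfl⟩)
      -- extend s by (i, w)
      set w := (hVs i).choose with hwdef
      have hw : w ∈ Vs i := (hVs i).choose_spec
      have hnotin : (i, w) ∉ s := hinotin w
      have hS' : insert (i, w) s ∈ S := by
        refine (hmemS _).2 ⟨⟨Finset.insert_nonempty _ _, ?_, ?_⟩, ?_⟩
        · intro p hp
          rcases Finset.mem_insert.1 hp with rfl | hp
          · exact hw
          · exact hmem _ hp
        · intro p hp q hq hpq
          rcases Finset.mem_insert.1 hp with rfl | hp <;>
            rcases Finset.mem_insert.1 hq with rfl | hq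
          · rfl
          · exact absurd (Finset.mem_image.2 ⟨q, hq, hpq.symm⟩) hi
          · exact absurd (Finset.mem_image.2 ⟨p, hp, hpq⟩) hi
          · exact huniq p hp q hq hpq
        · rw [Finset.card_insert_of_notMem hnotin]
          omega
      have := hmax _ hS' (Finset.subset_insert _ _)
      exact hnotin (this ▸ Finset.mem_insert_self (i, w) s)
    · rintro ⟨hcard, hmem, huniq⟩
      have hne : s.Nonempty := Finset.card_pos.1 (by omega)
      refine ⟨(hmemS s).2 ⟨⟨hne, hmem, huniq⟩, le_of_eq hcard⟩, ?_⟩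
      intro t htS hst
      exact Finset.eq_of_subset_of_card_le hst (by
        have := ((hmemS t).1 htS).2; omega)
  -- purity
  have hpure : IsPure S d := fun s hs => ((hfacet_iff s).1 hs).1
  -- the finset of all facets
  set U : Finset (Fin n × α) := Finset.univ.biUnion (fun i => (Vs i).image (fun v => (i, v)))
    with hU
  set F : Finset (Finset (Fin n × α)) := U.powerset.filter (PFacet Vs d) with hF
  have hFm : ∀ s, s ∈ F ↔ PFacet Vs d s := by
    intro s
    simp only [hF, Finset.mem_filter, Finset.mem_powerset, and_iff_right_iff_imp]
    intro hs p hp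
    simp only [hU, Finset.mem_biUnion, Finset.mem_image, Finset.mem_univ, true_and]
    exact ⟨p.1, p.2, hs.2.1 p hp, rfl⟩
  -- a particular facet, to show F is nonempty
  have hs0 : PFacet Vs d
      (Finset.univ.image fun j : Fin (d + 1) =>
        ((j.castLE hdn), (hVs (j.castLE hdn)).choose)) := by
    have hinj : Function.Injective
        (fun j : Fin (d + 1) => ((j.castLE hdn), (hVs (j.castLE hdn)).choose)) := by
      intro a b hab
      exact Fin.castLE_injective hdn (congrArg Prod.fst hab)
    refine ⟨?_, ?_, ?_⟩
    · rw [Finset.card_image_of_injective _ hinj, Finset.card_univ, Fintype.card_fin]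
    · rintro p hp
      obtain ⟨j, -, rfl⟩ := Finset.mem_image.1 hp
      exact (hVs _).choose_spec
    · rintro p hp q hq h
      obtain ⟨j, -, rfl⟩ := Finset.mem_image.1 hp
      obtain ⟨j', -, rfl⟩ := Finset.mem_image.1 hq
      have : j = j' := Fin.castLE_injective hdn h
      subst this
      rfl
  -- enumerate facets by their lexicographic keys
  haveI : WellFoundedLT (Fin n) := inferInstance
  haveI : DecidableEq (Lex (Fin n → ℕ)) := Classical.decEq _
  set K : Finset (Lex (Fin n → ℕ)) := F.image (fun s => toLex (pkey Vs s)) with hK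
  have hexu : ∀ x ∈ K, ∃! s, s ∈ F ∧ toLex (pkey Vs s) = x := by
    intro x hx
    obtain ⟨s, hsF, hsx⟩ := Finset.mem_image.1 hx
    refine ⟨s, ⟨hsF, hsx⟩, ?_⟩
    rintro t ⟨htF, htx⟩
    exact pkey_injective ((hFm _).1 htF) ((hFm _).1 hsF) (toLex.injective (htx.trans hsx.symm))
  have hKne : K.Nonempty := ⟨_, Finset.mem_image.2 ⟨_, (hFm _).2 hs0, rfl⟩⟩
  refine ⟨hpure, K.card - 1, ?_⟩
  have hKcard : K.card = (K.card - 1) + 1 := by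
    have := Finset.card_pos.2 hKne; omega
  set N := K.card - 1 with hN
  set oif := K.orderIsoOfFin hKcard with hoif
  haveI : ∀ x : Lex (Fin n → ℕ),
      DecidablePred (fun s : Finset (Fin n × α) => toLex (pkey Vs s) = x) :=
    fun _ => Classical.decPred _
  set φ : Fin (N + 1) → Finset (Fin n × α) := fun i =>
    F.choose (fun s => toLex (pkey Vs s) = (oif i).1) (hexu (oif i).1 (oif i).2) with hφ
  have hφF : ∀ i, φ i ∈ F := fun i => Finset.choose_mem _ _ _
  have hφkey : ∀ i, toLex (pkey Vs (φ i)) = (oif i).1 := fun i =>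
    Finset.choose_property (fun s => toLex (pkey Vs s) = (oif i).1) F
      (hexu (oif i).1 (oif i).2)
  have hφfac : ∀ i, PFacet Vs d (φ i) := fun i => (hFm _).1 (hφF i)
  have hmono : ∀ {i k : Fin (N + 1)}, (i : ℕ) < (k : ℕ) →
      toLex (pkey Vs (φ i)) < toLex (pkey Vs (φ k)) := by
    intro i k hik
    rw [hφkey, hφkey]
    exact Subtype.coe_lt_coe.2 (oif.strictMono (Fin.lt_def.2 hik))
  have hindex : ∀ (k : Fin (N + 1)) (χ : Finset (Fin n × α)), PFacet Vs d χ →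
      toLex (pkey Vs χ) < toLex (pkey Vs (φ k)) →
      ∃ m : Fin (N + 1), (m : ℕ) < (k : ℕ) ∧ φ m = χ := by
    intro k χ hχ hlt
    have hxK : toLex (pkey Vs χ) ∈ K := Finset.mem_image.2 ⟨χ, (hFm _).2 hχ, rfl⟩
    refine ⟨oif.symm ⟨_, hxK⟩, ?_, ?_⟩
    · have hm : oif.symm ⟨_, hxK⟩ < k := by
        rw [← oif.lt_iff_lt, ← Subtype.coe_lt_coe, oif.apply_symm_apply, ← hφkey k]
        exact hlt
      exact Fin.lt_def.1 hm
    · refine (hexu _ hxK).unique ⟨hφF _, ?_⟩ ⟨(hFm _).2 hχ, rfl⟩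
      rw [hφkey, oif.apply_symm_apply]
  refine ⟨φ, ?_, ?_, ?_, ?_⟩
  · intro a b h
    apply oif.injective
    apply Subtype.ext
    rw [← hφkey, ← hφkey, h]
  · intro i
    exact (hfacet_iff _).2 (hφfac i)
  · intro s hs
    have hsF : s ∈ F := (hFm _).2 ((hfacet_iff s).1 hs)
    have hxK : toLex (pkey Vs s) ∈ K := Finset.mem_image.2 ⟨s, hsF, rfl⟩
    refine ⟨oif.symm ⟨_, hxK⟩, ?_⟩
    refine (hexu _ hxK).unique ⟨hφF _, ?_⟩ ⟨hsF, rfl⟩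
    rw [hφkey, oif.apply_symm_apply]
  · -- the shelling condition
    intro k hk
    have hsk : PFacet Vs d (φ k) := hφfac k
    constructor
    · have h0 : ((⟨0, Nat.succ_pos _⟩ : Fin (N + 1)) : ℕ) < (k : ℕ) := hk
      obtain ⟨x, hx, -, hrem⟩ := exists_rem hsk (hφfac ⟨0, Nat.succ_pos _⟩)
        (Finset.empty_subset _) (Finset.empty_subset _) (hmono h0)
      obtain ⟨i, v⟩ := x
      obtain ⟨χ, hχ, hχlt, hχsub⟩ := rem_spec hVs hsk hx hrem
      obtain ⟨m, hm, heq⟩ := hindex k χ hχ hχlt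
      refine ⟨(φ k).erase (i, v), Finset.erase_subset _ _, ?_, m, hm, ?_⟩
      · rw [Finset.card_erase_of_mem hx, hsk.1]
        omega
      · rw [heq]; exact hχsub
    · intro t htne hts hold
      obtain ⟨i0, hi0k, hti0⟩ := hold
      obtain ⟨x, hx, hxt, hrem⟩ := exists_rem hsk (hφfac i0) hts hti0 (hmono hi0k)
      obtain ⟨i, v⟩ := x
      obtain ⟨χ, hχ, hχlt, hχsub⟩ := rem_spec hVs hsk hx hrem
      obtain ⟨m, hm, heq⟩ := hindex k χ hχ hχlt
      refine ⟨(φ k).erase (i, v), Finset.subset_erase.2 ⟨hts, hxt⟩,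
        Finset.erase_subset _ _, ?_, m, hm, ?_⟩
      · rw [Finset.card_erase_of_mem hx, hsk.1]
        omega
      · rw [heq]; exact hχsub
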